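/- Let p be prime and m a positive integer. The partitions of Z/p^m Z fixed by all translations x \mapsto x + y are exactly the m+1 partitions into cosets of the subgroups p^j * Z/p^m Z for 0 \le j \le m; in particular there are exactly m+1 such fixed partitions. -/

import Mathlib

/-- Stirling numbers of the second kind. -/
def stirling : ℕ → ℕ → ℕ
  | 0, 0 => 1
  | 0, _ + 1 => 0
  | _ + 1, 0 => 0
  | n + 1, k + 1 => stirling n k + (k + 1) * stirling n (k + 1)

/-- The `n`-th Bell number. -/
def bell (n : ℕ) : ℕ := ∑ k ∈ Finset.range (n + 1), stirling n k

section Aux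

variable {α : Type*} [AddCommGroup α]

lemma coset_mem_iff (H : AddSubgroup α) (x w : α) :
    w ∈ (fun z => x + z) '' (H : Set α) ↔ w - x ∈ H := by
  constructor
  · rintro ⟨h, hh, rfl⟩; simpa using hh
  · intro h
    refine ⟨w - x, h, ?_⟩
    show x + (w - x) = w
    abel

lemma coset_eq_of_mem (H : AddSubgroup α) {x a : α}
    (ha : a ∈ (fun z => x + z) '' (H : Set α)) :
    (fun z => x + z) '' (H : Set α) = (fun z => a + z) '' (H : Set α) := by
  rw [coset_mem_iff] at ha
  ext w
  rw [coset_mem_iff, coset_mem_iff]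
  constructor
  · intro h
    have : w - a = (w - x) - (a - x) := by abel
    rw [this]; exact H.sub_mem h ha
  · intro h
    have : w - x = (w - a) + (a - x) := by abel
    rw [this]; exact H.add_mem h ha

lemma coset_isPartition (H : AddSubgroup α) :
    Setoid.IsPartition {S : Set α | ∃ x, S = (fun z => x + z) '' (H : Set α)} := by
  constructor
  · rintro ⟨x, hx⟩
    have : x ∈ (∅ : Set α) := hx ▸ ⟨0, H.zero_mem, add_zero x⟩
    exact this
  · intro a
    refine ⟨(fun z => a + z) '' (H : Set α), ⟨⟨a, rfl⟩, ⟨0, H.zero_mem, add_zero a⟩⟩, ?_⟩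
    rintro S ⟨⟨x, rfl⟩, haS⟩
    exact coset_eq_of_mem H haS

lemma coset_fixed (H : AddSubgroup α) :
    ∀ y : α, ∀ A ∈ {S : Set α | ∃ x, S = (fun z => x + z) '' (H : Set α)},
      (fun x => x + y) '' A ∈ {S : Set α | ∃ x, S = (fun z => x + z) '' (H : Set α)} := by
  rintro y A ⟨x, rfl⟩
  refine ⟨y + x, ?_⟩
  rw [Set.image_image]
  exact Set.image_congr fun a _ => by abel

lemma fixed_eq_coset {P : Set (Set α)} (h1 : Setoid.IsPartition P)
    (h2 : ∀ y : α, ∀ A ∈ P, (fun x => x + y) '' A ∈ P) :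
    ∃ H : AddSubgroup α, P = {S | ∃ x, S = (fun z => x + z) '' (H : Set α)} := by
  obtain ⟨H0, ⟨hH0P, h0⟩, huniq⟩ := h1.2 0
  have uniq : ∀ a : α, ∀ A B, A ∈ P → B ∈ P → a ∈ A → a ∈ B → A = B := by
    intro a A B hA hB haA haB
    obtain ⟨C, -, hC⟩ := h1.2 a
    rw [hC A ⟨hA, haA⟩, hC B ⟨hB, haB⟩]
  have key : ∀ b ∈ H0, (fun x => x + b) '' H0 = H0 := fun b hb =>
    uniq b _ _ (h2 b H0 hH0P) hH0P ⟨0, h0, zero_add b⟩ hb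
  refine ⟨{ carrier := H0
            zero_mem' := h0
            add_mem' := ?_
            neg_mem' := ?_ }, ?_⟩
  · intro a b ha hb
    have hm2 : a + b ∈ (fun x => x + b) '' H0 := ⟨a, ha, rfl⟩
    rw [key b hb] at hm2
    exact hm2
  · intro a ha
    have h' : (fun x => x + (-a)) '' H0 ∈ P := h2 (-a) H0 hH0P
    have h0' : (0 : α) ∈ (fun x => x + (-a)) '' H0 := ⟨a, ha, add_neg_cancel a⟩
    have hEq : (fun x => x + (-a)) '' H0 = H0 := uniq 0 _ _ h' hH0P h0' h0
    have hm2 : -a ∈ (fun x => x + (-a)) '' H0 := ⟨0, h0, zero_add _⟩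
    rw [hEq] at hm2
    exact hm2
  · ext S
    simp only [Set.mem_setOf_eq]
    constructor
    · intro hS
      have hne : S.Nonempty := Set.nonempty_iff_ne_empty.2 (fun h => h1.1 (h ▸ hS))
      obtain ⟨a, ha⟩ := hne
      refine ⟨a, ?_⟩
      have hmem : (fun x => x + a) '' H0 ∈ P := h2 a H0 hH0P
      have hSa : S = (fun x => x + a) '' H0 := uniq a _ _ hS hmem ha ⟨0, h0, zero_add a⟩
      rw [hSa]
      exact Set.image_congr fun z _ => add_comm z a
    · rintro ⟨x, rfl⟩
      have hmem := h2 x H0 hH0P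
      have : (fun t => t + x) '' H0 = (fun z => x + z) '' H0 :=
        Set.image_congr fun z _ => add_comm z x
      show (fun z => x + z) '' H0 ∈ P
      rw [← this]
      exact hmem

lemma zmultiples_neg' (a : α) :
    AddSubgroup.zmultiples (-a) = AddSubgroup.zmultiples a := by
  ext x
  simp only [AddSubgroup.mem_zmultiples_iff]
  constructor
  · rintro ⟨k, rfl⟩; exact ⟨-k, by simp⟩
  · rintro ⟨k, rfl⟩; exact ⟨-k, by simp⟩

end Aux

lemma zmod_addSubgroup (p m : ℕ) (hp : p.Prime) (H : AddSubgroup (ZMod (p ^ m))) :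
    ∃ j, j ≤ m ∧ H = AddSubgroup.zmultiples ((p : ZMod (p ^ m)) ^ j) := by
  set f := Int.castAddHom (ZMod (p ^ m)) with hfdef
  have hf : Function.Surjective f := ZMod.intCast_surjective
  obtain ⟨d, hd⟩ := Int.subgroup_cyclic (H.comap f)
  rw [← AddSubgroup.zmultiples_eq_closure] at hd
  have hHmap : H = (H.comap f).map f :=
    (AddSubgroup.map_comap_eq_self_of_surjective hf H).symm
  have hdvd : d ∣ (p ^ m : ℤ) := by
    have hmem : ((p ^ m : ℕ) : ℤ) ∈ H.comap f := by
      simp only [AddSubgroup.mem_comap, hfdef, Int.coe_castAddHom, Int.cast_natCast,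
        ZMod.natCast_self]
      exact H.zero_mem
    rw [hd, AddSubgroup.mem_zmultiples_iff] at hmem
    obtain ⟨k, hk⟩ := hmem
    rw [smul_eq_mul] at hk
    push_cast at hk
    exact ⟨k, by rw [← hk]; ring⟩
  have habs : d.natAbs ∣ p ^ m := by
    have := Int.natAbs_dvd_natAbs.mpr hdvd
    simpa [Int.natAbs_pow] using this
  obtain ⟨j, hj, hdj⟩ := (Nat.dvd_prime_pow hp).mp habs
  refine ⟨j, hj, ?_⟩
  have hmap : H = AddSubgroup.zmultiples ((d : ZMod (p ^ m))) := by
    rw [hHmap, hd, AddMonoidHom.map_zmultiples]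
    simp [hfdef]
  have hcast : AddSubgroup.zmultiples ((d : ZMod (p ^ m))) =
      AddSubgroup.zmultiples (((d.natAbs : ℤ) : ZMod (p ^ m))) := by
    rcases Int.natAbs_eq d with h | h
    · rw [← h]
    · have hdd : ((d : ZMod (p ^ m))) = -(((d.natAbs : ℤ) : ZMod (p ^ m))) := by
        conv_lhs => rw [h]
        push_cast
        ring
      rw [hdd, zmultiples_neg']
  rw [hmap, hcast, hdj]
  congr 1
  push_cast
  ring

lemma card_zm (p m : ℕ) (hp : p.Prime) (j : ℕ) (hj : j ≤ m) :
    Nat.card (AddSubgroup.zmultiples ((p : ZMod (p ^ m)) ^ j)) = p ^ (m - j) := by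
  have h1 : ((p : ZMod (p ^ m)) ^ j) = ((p ^ j : ℕ) : ZMod (p ^ m)) := by push_cast; ring
  rw [h1, Nat.card_zmultiples, ZMod.addOrderOf_coe _ (pow_ne_zero m hp.pos.ne')]
  have hg : Nat.gcd (p ^ m) (p ^ j) = p ^ j := Nat.gcd_eq_right (pow_dvd_pow p hj)
  rw [hg, Nat.pow_div hj hp.pos]

theorem fixed_partitions_eq_coset_partitions (p m : ℕ) (hp : p.Prime) (hm : 0 < m) :
    {P : Set (Set (ZMod (p ^ m))) | Setoid.IsPartition P ∧
        ∀ y : ZMod (p ^ m), ∀ A ∈ P, (fun x => x + y) '' A ∈ P} =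
      {P | ∃ j : ℕ, j ≤ m ∧
        P = {S | ∃ x : ZMod (p ^ m),
          S = (fun z => x + z) '' (AddSubgroup.zmultiples ((p : ZMod (p ^ m)) ^ j) : Set (ZMod (p ^ m)))}} ∧
    {P : Set (Set (ZMod (p ^ m))) | Setoid.IsPartition P ∧
        ∀ y : ZMod (p ^ m), ∀ A ∈ P, (fun x => x + y) '' A ∈ P}.ncard = m + 1 := by
  set cp : ℕ → Set (Set (ZMod (p ^ m))) := fun j =>
    {S | ∃ x : ZMod (p ^ m),
      S = (fun z => x + z) '' (AddSubgroup.zmultiples ((p : ZMod (p ^ m)) ^ j) : Set (ZMod (p ^ m)))}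
    with hcp
  have hset : {P : Set (Set (ZMod (p ^ m))) | Setoid.IsPartition P ∧
      ∀ y : ZMod (p ^ m), ∀ A ∈ P, (fun x => x + y) '' A ∈ P} =
      {P | ∃ j : ℕ, j ≤ m ∧ P = cp j} := by
    ext P
    simp only [Set.mem_setOf_eq]
    constructor
    · rintro ⟨h1, h2⟩
      obtain ⟨H, rfl⟩ := fixed_eq_coset h1 h2
      obtain ⟨j, hj, rfl⟩ := zmod_addSubgroup p m hp H
      exact ⟨j, hj, rfl⟩
    · rintro ⟨j, hj, rfl⟩
      exact ⟨coset_isPartition _, coset_fixed _⟩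
  refine ⟨hset, ?_⟩
  rw [hset]
  -- injectivity of cp on Iic m
  have hsub_inj : ∀ j j', j ≤ m → j' ≤ m →
      AddSubgroup.zmultiples ((p : ZMod (p ^ m)) ^ j) =
        AddSubgroup.zmultiples ((p : ZMod (p ^ m)) ^ j') → j = j' := by
    intro j j' hj hj' hE
    have := card_zm p m hp j hj
    rw [hE, card_zm p m hp j' hj'] at this
    have h2 := Nat.pow_right_injective hp.two_le this.symm
    omega
  have hinj : Set.InjOn cp (Set.Iic m) := by
    intro j hj j' hj' hE
    set H := AddSubgroup.zmultiples ((p : ZMod (p ^ m)) ^ j) with hH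
    set H' := AddSubgroup.zmultiples ((p : ZMod (p ^ m)) ^ j') with hH'
    have hHmem : (H : Set (ZMod (p ^ m))) ∈ cp j := by
      refine ⟨0, ?_⟩
      ext w
      rw [coset_mem_iff]
      simp [H]
    rw [hE] at hHmem
    obtain ⟨x, hx⟩ := hHmem
    have h0 : (0 : ZMod (p ^ m)) ∈ (fun z => x + z) '' (H' : Set (ZMod (p ^ m))) := by
      rw [← hx]; exact H.zero_mem
    have hH0 : (fun z => x + z) '' (H' : Set (ZMod (p ^ m))) =
        (fun z => (0 : ZMod (p ^ m)) + z) '' (H' : Set (ZMod (p ^ m))) :=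
      coset_eq_of_mem H' h0
    have hsets : (H : Set (ZMod (p ^ m))) = (H' : Set (ZMod (p ^ m))) := by
      rw [hx, hH0]
      ext w
      rw [coset_mem_iff]
      simp
    exact hsub_inj j j' hj hj' (SetLike.ext' hsets)
  have himg : {P | ∃ j : ℕ, j ≤ m ∧ P = cp j} = cp '' Set.Iic m := by
    ext P
    simp only [Set.mem_setOf_eq, Set.mem_image, Set.mem_Iic]
    constructor
    · rintro ⟨j, hj, rfl⟩; exact ⟨j, hj, rfl⟩
    · rintro ⟨j, hj, rfl⟩; exact ⟨j, hj, rfl⟩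
  rw [himg, Set.ncard_image_of_injOn hinj, ← Finset.coe_Iic, Set.ncard_coe_finset,
    Nat.card_Iic]
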